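/- Let X, Y be strings over an alphabet Σ, let 0 ≤ c̄ < c ≤ |X|, W = X[c̄..c), and let g be an integer with 0 < g ≤ |W| that is a period of W. Let ā ≥ 0 and s ≥ 1 be integers with ā + (s−1)g + |W| ≤ |Y| such that Y[ā+ig..ā+ig+|W|) = W for every i ∈ [0..s). Define ū = max{d : d ≤ c̄ and X[c̄−d..c̄) = X[c̄+g−d..c̄+g)} and v̄ = max{d : d ≤ ā and Y[ā−d..ā) = Y[ā+g−d..ā+g)}, and assume ū < c̄. Then for every i ∈ [0..s), if X occurs in Y at position p = ā + ig − c̄ (with 0 ≤ p and p + |X| ≤ |Y|), then ig = ū − v̄, i.e., p = ā − c̄ + ū − v̄; in particular, there is at most one i ∈ [0..s) for which X occurs in Y at position ā + ig − c̄. -/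
import Mathlib


namespace IPM

/-- A positive integer `g ≤ |S|` is a period of `S` if `S[t] = S[t+g]` for every
`t ∈ [0..|S|−g)`. -/
def IsPeriod {β : Type} (S : List β) (g : ℕ) : Prop :=
  0 < g ∧ g ≤ S.length ∧ ∀ t, t + g < S.length → S[t]? = S[t + g]?

/-- `W` occurs in `S` at position `p`, i.e. `S[p..p+|W|) = W`. -/
def OccursAt {β : Type} (W S : List β) (p : ℕ) : Prop :=
  p + W.length ≤ S.length ∧ (S.drop p).take W.length = W

/-- Two `take`-of-`drop` slices of the same length agree iff they agree pointwise. -/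
theorem take_drop_ext {β : Type} (S T : List β) (a b d : ℕ) :
    (S.drop a).take d = (T.drop b).take d ↔ ∀ r < d, S[a+r]? = T[b+r]? := by
  constructor
  · intro h r hr
    have h1 : ((S.drop a).take d)[r]? = ((T.drop b).take d)[r]? := by rw [h]
    simpa [List.getElem?_take, List.getElem?_drop, hr] using h1
  · intro h
    apply List.ext_getElem?
    intro r
    by_cases hr : r < d
    · simp only [List.getElem?_take, List.getElem?_drop, if_pos hr]
      exact h r hr
    · simp only [List.getElem?_take, if_neg hr]

/-- Let `W = X[c̄..c)` with `0 ≤ c̄ < c ≤ |X|`, let `g` with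
`0 < g ≤ |W|` be a period of `W`, and let `Y[ā+ig..ā+ig+|W|) = W` for all
`i ∈ [0..s)`. Let `ū` and `v̄` be the maximal backward extensions of the period `g`
at position `c̄` of `X` and at position `ā` of `Y`, and assume `ū < c̄`. Then for
every `i ∈ [0..s)`, if `X` occurs in `Y` at position `ā + ig − c̄` (nonnegative, with
the occurrence inside `Y`), then `ig = ū − v̄` (i.e. `ig + v̄ = ū`); in particular at
most one `i ∈ [0..s)` yields an occurrence. -/
theorem left_mismatch_unique_candidate {β : Type} (X Y : List β)
    (cb c : ℕ) (hcb : cb < c) (hc : c ≤ X.length)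
    (W : List β) (hW : W = (X.drop cb).take (c - cb))
    (g : ℕ) (hgW : IsPeriod W g)
    (ab s : ℕ) (hs : 1 ≤ s) (hfit : ab + (s - 1) * g + W.length ≤ Y.length)
    (hoccW : ∀ i < s, OccursAt W Y (ab + i * g))
    (ub : ℕ) (hub : IsGreatest {d : ℕ | d ≤ cb ∧
      (X.drop (cb - d)).take d = (X.drop (cb + g - d)).take d} ub)
    (vb : ℕ) (hvb : IsGreatest {d : ℕ | d ≤ ab ∧
      (Y.drop (ab - d)).take d = (Y.drop (ab + g - d)).take d} vb)
    (hubcb : ub < cb) :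
    (∀ i < s, cb ≤ ab + i * g → OccursAt X Y (ab + i * g - cb) →
      i * g + vb = ub) ∧
    (∀ i < s, ∀ j < s,
      cb ≤ ab + i * g → OccursAt X Y (ab + i * g - cb) →
      cb ≤ ab + j * g → OccursAt X Y (ab + j * g - cb) → i = j) := by
  obtain ⟨hg0, hgle, hper⟩ := hgW
  have hWlen : W.length = c - cb := by
    rw [hW]
    simp only [List.length_take, List.length_drop]
    omega
  -- pointwise form of the occurrences of `W` in `Y`
  have occ : ∀ j, j < s → ∀ r, r < W.length → Y[ab + j * g + r]? = W[r]? := by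
    intro j hj r hr
    have h2 : (Y.drop (ab + j * g)).take W.length = (W.drop 0).take W.length := by
      simp only [List.drop_zero, List.take_length]
      exact (hoccW j hj).2
    simpa using (take_drop_ext Y W (ab + j * g) 0 W.length).1 h2 r hr
  have hubpt : ∀ r, r < ub → X[cb - ub + r]? = X[cb + g - ub + r]? :=
    fun r hr => (take_drop_ext X X _ _ ub).1 hub.1.2 r hr
  have hvbpt : ∀ r, r < vb → Y[ab - vb + r]? = Y[ab + g - vb + r]? :=
    fun r hr => (take_drop_ext Y Y _ _ vb).1 hvb.1.2 r hr
  have hubcb' : ub ≤ cb := hub.1.1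
  have hvbab : vb ≤ ab := hvb.1.1
  -- mismatch in `X` just left of the maximal `ub`-extension
  have hXmis : X[cb - (ub + 1)]? ≠ X[cb + g - (ub + 1)]? := by
    intro heq
    have hmem : ub + 1 ∈ {d : ℕ | d ≤ cb ∧
        (X.drop (cb - d)).take d = (X.drop (cb + g - d)).take d} := by
      refine ⟨by omega, (take_drop_ext X X _ _ _).2 ?_⟩
      intro r hr
      cases r with
      | zero =>
        have e1 : cb - (ub + 1) + 0 = cb - (ub + 1) := by omega
        have e2 : cb + g - (ub + 1) + 0 = cb + g - (ub + 1) := by omega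
        rw [e1, e2]; exact heq
      | succ r =>
        have e1 : cb - (ub + 1) + (r + 1) = cb - ub + r := by omega
        have e2 : cb + g - (ub + 1) + (r + 1) = cb + g - ub + r := by omega
        rw [e1, e2]; exact hubpt r (by omega)
    have := hub.2 hmem
    omega
  -- `Y` has period `g` on the region `[ab - vb, ab + (s-1)·g + |W|)`
  have hYper : ∀ m, ab - vb ≤ m → m + g < ab + (s - 1) * g + W.length →
      Y[m]? = Y[m + g]? := by
    intro m h1 h2
    by_cases hm : m < ab
    · have hr : m - (ab - vb) < vb := by omega
      have e1 : ab - vb + (m - (ab - vb)) = m := by omega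
      have e2 : ab + g - vb + (m - (ab - vb)) = m + g := by omega
      have h := hvbpt _ hr
      rwa [e1, e2] at h
    · push_neg at hm
      by_cases hq : m - ab < (s - 1) * g
      · obtain ⟨j, r, hrg, hjr⟩ : ∃ j r, r < g ∧ m - ab = j * g + r :=
          ⟨(m - ab) / g, (m - ab) % g, Nat.mod_lt _ hg0, by
            rw [Nat.mul_comm]; exact (Nat.div_add_mod (m - ab) g).symm⟩
        have hjs : j + 1 < s := by
          by_contra hc2
          push_neg at hc2
          have h3 : (s - 1) * g ≤ j * g := Nat.mul_le_mul (by omega) (le_refl g)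
          omega
        have hmul : (j + 1) * g = j * g + g := by ring
        have e1 : ab + j * g + r = m := by omega
        have e2 : ab + (j + 1) * g + r = m + g := by omega
        have o1 := occ j (by omega) r (by omega)
        have o2 := occ (j + 1) hjs r (by omega)
        rw [e1] at o1
        rw [e2] at o2
        rw [o1, o2]
      · push_neg at hq
        have hsm : s - 1 < s := by omega
        have hrW : (m - ab - (s - 1) * g) + g < W.length := by omega
        have e1 : ab + (s - 1) * g + (m - ab - (s - 1) * g) = m := by omega
        have e2 : ab + (s - 1) * g + ((m - ab - (s - 1) * g) + g) = m + g := by omega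
        have o1 := occ (s - 1) hsm (m - ab - (s - 1) * g) (by omega)
        have o2 := occ (s - 1) hsm ((m - ab - (s - 1) * g) + g) hrW
        rw [e1] at o1
        rw [e2] at o2
        rw [o1, o2]
        exact hper _ (by omega)
  -- main claim
  have main : ∀ i, i < s → cb ≤ ab + i * g → OccursAt X Y (ab + i * g - cb) →
      i * g + vb = ub := by
    intro i hi hcble hocc
    obtain ⟨q, hq⟩ : ∃ q, q = i * g := ⟨_, rfl⟩
    have hqQ : q ≤ (s - 1) * g := by
      rw [hq]; exact Nat.mul_le_mul (by omega) (le_refl g)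
    rw [← hq] at hcble hocc
    have hXlen : cb < X.length := by omega
    have occX : ∀ t, t < X.length → Y[ab + q - cb + t]? = X[t]? := by
      intro t ht
      have h2 : (Y.drop (ab + q - cb)).take X.length = (X.drop 0).take X.length := by
        simp only [List.drop_zero, List.take_length]
        exact hocc.2
      simpa using (take_drop_ext Y X _ 0 X.length).1 h2 t ht
    rcases Nat.lt_trichotomy (q + vb) ub with hlt | heq | hgt
    · exfalso
      -- we could extend `vb` by one more character, contradiction
      have t1lt : cb - (q + vb + 1) < X.length := by omega
      have t2lt : cb + g - (q + vb + 1) < X.length := by omega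
      have o1 := occX _ t1lt
      have o2 := occX _ t2lt
      have e1 : ab + q - cb + (cb - (q + vb + 1)) = ab - (vb + 1) := by omega
      have e2 : ab + q - cb + (cb + g - (q + vb + 1)) = ab + g - (vb + 1) := by omega
      rw [e1] at o1
      rw [e2] at o2
      have hx := hubpt (ub - (q + vb + 1)) (by omega)
      have e3 : cb - ub + (ub - (q + vb + 1)) = cb - (q + vb + 1) := by omega
      have e4 : cb + g - ub + (ub - (q + vb + 1)) = cb + g - (q + vb + 1) := by omega
      rw [e3, e4] at hx
      have key : Y[ab - (vb + 1)]? = Y[ab + g - (vb + 1)]? := by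
        rw [← o1, ← o2] at hx
        exact hx
      have hmem : vb + 1 ∈ {d : ℕ | d ≤ ab ∧
          (Y.drop (ab - d)).take d = (Y.drop (ab + g - d)).take d} := by
        refine ⟨by omega, (take_drop_ext Y Y _ _ _).2 ?_⟩
        intro r hr
        cases r with
        | zero =>
          have f1 : ab - (vb + 1) + 0 = ab - (vb + 1) := by omega
          have f2 : ab + g - (vb + 1) + 0 = ab + g - (vb + 1) := by omega
          rw [f1, f2]; exact key
        | succ r =>
          have f1 : ab - (vb + 1) + (r + 1) = ab - vb + r := by omega
          have f2 : ab + g - (vb + 1) + (r + 1) = ab + g - vb + r := by omega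
          rw [f1, f2]; exact hvbpt r (by omega)
      have := hvb.2 hmem
      omega
    · omega
    · exfalso
      -- transport the mismatch of `X` into the periodic region of `Y`
      have hm1 : ab - vb ≤ ab + q - (ub + 1) := by omega
      have hm2 : (ab + q - (ub + 1)) + g < ab + (s - 1) * g + W.length := by omega
      have hy := hYper _ hm1 hm2
      have o1 := occX (cb - (ub + 1)) (by omega)
      have o2 := occX (cb + g - (ub + 1)) (by omega)
      have e1 : ab + q - cb + (cb - (ub + 1)) = ab + q - (ub + 1) := by omega
      have e2 : ab + q - cb + (cb + g - (ub + 1)) = (ab + q - (ub + 1)) + g := by omega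
      rw [e1] at o1
      rw [e2] at o2
      exact hXmis (o1.symm.trans (hy.trans o2))
  refine ⟨main, ?_⟩
  intro i hi j hj hci hoi hcj hoj
  have h1 := main i hi hci hoi
  have h2 := main j hj hcj hoj
  have h3 : i * g = j * g := by omega
  exact Nat.eq_of_mul_eq_mul_right hg0 h3

end IPM
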